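/- Let N,d ≥ 1, let Δ ∈ ℝ^{N×N} be symmetric positive semidefinite with largest eigenvalue λ₁ and smallest eigenvalue λ₂, let λ > 0, and let 0 < τ ≤ 1/λ₁ (assuming λ₁ > 0). Define the iteration Z^(k+1) = (I − τΔ)Z^(k) from any Z^(0) ∈ ℝ^{N×d}, and the energy E(Z,k) = ‖Z − Z^(k)‖_F² + λ·tr(Zᵀ Δ Z). Then for every k ≥ 1: (1 − τλ₁)² · E(Z^(k), k−1) ≤ E(Z^(k+1), k) ≤ (1 − τλ₂)² · E(Z^(k), k−1). -/

import Mathlib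

open Finset Matrix

lemma trace_quad_nonneg {N d : ℕ} (P : Matrix (Fin N) (Fin N) ℝ) (hP : P.PosSemidef)
    (W : Matrix (Fin N) (Fin d) ℝ) : 0 ≤ (Wᵀ * P * W).trace := by
  have h : (Wᵀ * P * W).trace = ∑ c, (star fun i => W i c) ⬝ᵥ (P *ᵥ fun i => W i c) := by
    simp only [Matrix.trace, Matrix.diag, Matrix.mul_apply, dotProduct, mulVec, star,
      Pi.star_apply, star_trivial, transpose_apply]
    refine Finset.sum_congr rfl fun c _ => ?_
    simp only [Finset.sum_mul, Finset.mul_sum, id]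
    rw [Finset.sum_comm]
    exact Finset.sum_congr rfl fun i _ => Finset.sum_congr rfl fun j _ => by ring
  rw [h]
  exact Finset.sum_nonneg fun c _ => hP.dotProduct_mulVec_nonneg _

lemma frob_trace {N d : ℕ} (W : Matrix (Fin N) (Fin d) ℝ) :
    ∑ i, ∑ c, (W i c) ^ 2 = (Wᵀ * W).trace := by
  simp only [Matrix.trace, Matrix.diag, Matrix.mul_apply, transpose_apply, sq]
  rw [Finset.sum_comm]

lemma quad_mono {N d : ℕ} (P Q : Matrix (Fin N) (Fin N) ℝ) (h : (Q - P).PosSemidef)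
    (W : Matrix (Fin N) (Fin d) ℝ) : (Wᵀ * P * W).trace ≤ (Wᵀ * Q * W).trace := by
  have h0 := trace_quad_nonneg _ h W
  rw [Matrix.mul_sub, Matrix.sub_mul, trace_sub] at h0
  linarith

set_option maxHeartbeats 1000000 in
theorem stmt_5 (N d : ℕ) (hN : 1 ≤ N) (hd : 1 ≤ d)
    (Δ : Matrix (Fin N) (Fin N) ℝ)
    (hH : Δ.IsHermitian) (hΔ : Δ.PosSemidef)
    (lam1 lam2 : ℝ)
    (hlam1 : IsGreatest (Set.range hH.eigenvalues) lam1)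
    (hlam2 : IsLeast (Set.range hH.eigenvalues) lam2)
    (lam : ℝ) (hlam : 0 < lam)
    (hlam1pos : 0 < lam1)
    (τ : ℝ) (hτ : 0 < τ) (hτ1 : τ ≤ 1 / lam1)
    (Z : ℕ → Matrix (Fin N) (Fin d) ℝ)
    (hZ : ∀ k, Z (k + 1) = ((1 : Matrix (Fin N) (Fin N) ℝ) - τ • Δ) * Z k) :
    ∀ k, 1 ≤ k →
      (1 - τ * lam1) ^ 2 * ((∑ i, ∑ c, (Z k i c - Z (k - 1) i c) ^ 2)
            + lam * ((Z k)ᵀ * Δ * Z k).trace)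
          ≤ (∑ i, ∑ c, (Z (k + 1) i c - Z k i c) ^ 2)
            + lam * ((Z (k + 1))ᵀ * Δ * Z (k + 1)).trace
      ∧ (∑ i, ∑ c, (Z (k + 1) i c - Z k i c) ^ 2)
            + lam * ((Z (k + 1))ᵀ * Δ * Z (k + 1)).trace
          ≤ (1 - τ * lam2) ^ 2 * ((∑ i, ∑ c, (Z k i c - Z (k - 1) i c) ^ 2)
            + lam * ((Z k)ᵀ * Δ * Z k).trace) := by
  intro k hk
  obtain ⟨m, rfl⟩ : ∃ m, k = m + 1 := ⟨k - 1, (Nat.succ_pred_eq_of_pos hk).symm⟩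
  simp only [Nat.add_sub_cancel]
  set μ : Fin N → ℝ := hH.eigenvalues with hμdef
  set U : Matrix (Fin N) (Fin N) ℝ := (hH.eigenvectorUnitary : Matrix (Fin N) (Fin N) ℝ)
    with hUdef
  have hsUU : star U * U = 1 := Matrix.mem_unitaryGroup_iff'.mp hH.eigenvectorUnitary.2
  have hUsU : U * star U = 1 := Matrix.mem_unitaryGroup_iff.mp hH.eigenvectorUnitary.2
  set cd : (Fin N → ℝ) → Matrix (Fin N) (Fin N) ℝ := fun g => U * diagonal g * star U
    with hcddef
  have hcd_mul : ∀ g h : Fin N → ℝ, cd g * cd h = cd (g * h) := by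
    intro g h
    simp only [hcddef, Matrix.mul_assoc]
    rw [← Matrix.mul_assoc (star U) U (diagonal h * star U), hsUU, Matrix.one_mul,
      ← Matrix.mul_assoc (diagonal g) (diagonal h) (star U), diagonal_mul_diagonal]
    rfl
  have hΔcd : Δ = cd μ := by simpa using hH.spectral_theorem
  have hone : (1 : Matrix (Fin N) (Fin N) ℝ) = cd 1 := by
    simp only [hcddef]
    have h1 : diagonal (1 : Fin N → ℝ) = 1 := Matrix.diagonal_one
    rw [h1, Matrix.mul_one]
    exact hUsU.symm
  have hcd_sub : ∀ g h : Fin N → ℝ, cd g - cd h = cd (g - h) := by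
    intro g h
    have h1 : diagonal (g - h) = diagonal g - diagonal h := (Matrix.diagonal_sub g h).symm
    simp only [hcddef, h1, Matrix.mul_sub, Matrix.sub_mul]
  have hcd_smul : ∀ (c : ℝ) (g : Fin N → ℝ), c • cd g = cd (c • g) := by
    intro c g
    have h1 : diagonal (c • g) = c • diagonal g := Matrix.diagonal_smul c g
    simp only [hcddef, h1, Matrix.mul_smul, Matrix.smul_mul]
  have hcd_psd : ∀ g : Fin N → ℝ, (∀ i, 0 ≤ g i) → (cd g).PosSemidef := by
    intro g hg
    simpa [hcddef, Matrix.star_eq_conjTranspose] using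
      (Matrix.PosSemidef.diagonal hg).mul_mul_conjTranspose_same U
  set M : Matrix (Fin N) (Fin N) ℝ := (1 : Matrix (Fin N) (Fin N) ℝ) - τ • Δ with hMdef
  have hMcd : M = cd (fun i => 1 - τ * μ i) := by
    have h1 : (fun i => 1 - τ * μ i) = (1 : Fin N → ℝ) - τ • μ := by
      funext i; simp
    rw [hMdef, h1, ← hcd_sub, ← hcd_smul, ← hone, ← hΔcd]
  -- scalar facts
  have hμ0 : ∀ i, 0 ≤ μ i := fun i => hΔ.eigenvalues_nonneg i
  have hμ1 : ∀ i, μ i ≤ lam1 := fun i => hlam1.2 (Set.mem_range_self i)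
  have hμ2 : ∀ i, lam2 ≤ μ i := fun i => hlam2.2 (Set.mem_range_self i)
  have htl1 : τ * lam1 ≤ 1 := by
    have := (le_div_iff₀ hlam1pos).mp hτ1; linarith
  have ha0 : 0 ≤ 1 - τ * lam1 := by linarith
  have hax : ∀ i, 1 - τ * lam1 ≤ 1 - τ * μ i := by
    intro i
    have := mul_le_mul_of_nonneg_left (hμ1 i) hτ.le
    linarith
  have hxb : ∀ i, 1 - τ * μ i ≤ 1 - τ * lam2 := by
    intro i
    have := mul_le_mul_of_nonneg_left (hμ2 i) hτ.le
    linarith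
  have hx0 : ∀ i, 0 ≤ 1 - τ * μ i := fun i => le_trans ha0 (hax i)
  have hsq1 : ∀ i, (1 - τ * lam1) ^ 2 ≤ (1 - τ * μ i) * (1 - τ * μ i) := by
    intro i
    have := mul_self_le_mul_self ha0 (hax i)
    nlinarith
  have hsq2 : ∀ i, (1 - τ * μ i) * (1 - τ * μ i) ≤ (1 - τ * lam2) ^ 2 := by
    intro i
    have := mul_self_le_mul_self (hx0 i) (hxb i)
    nlinarith
  -- PSD gap matrices
  have g1 : ∀ i, 0 ≤ ((fun i => 1 - τ * μ i) * (fun i => 1 - τ * μ i)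
      - (1 - τ * lam1) ^ 2 • (1 : Fin N → ℝ)) i := by
    intro i
    simp only [Pi.sub_apply, Pi.mul_apply, Pi.smul_apply, Pi.one_apply, smul_eq_mul, mul_one]
    linarith [hsq1 i]
  have g2 : ∀ i, 0 ≤ ((1 - τ * lam2) ^ 2 • (1 : Fin N → ℝ)
      - (fun i => 1 - τ * μ i) * (fun i => 1 - τ * μ i)) i := by
    intro i
    simp only [Pi.sub_apply, Pi.mul_apply, Pi.smul_apply, Pi.one_apply, smul_eq_mul, mul_one]
    linarith [hsq2 i]
  have g3 : ∀ i, 0 ≤ ((fun i => 1 - τ * μ i) * μ * (fun i => 1 - τ * μ i)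
      - (1 - τ * lam1) ^ 2 • μ) i := by
    intro i
    simp only [Pi.sub_apply, Pi.mul_apply, Pi.smul_apply, smul_eq_mul]
    nlinarith [mul_nonneg (hμ0 i) (sub_nonneg.2 (hsq1 i))]
  have g4 : ∀ i, 0 ≤ ((1 - τ * lam2) ^ 2 • μ
      - (fun i => 1 - τ * μ i) * μ * (fun i => 1 - τ * μ i)) i := by
    intro i
    simp only [Pi.sub_apply, Pi.mul_apply, Pi.smul_apply, smul_eq_mul]
    nlinarith [mul_nonneg (hμ0 i) (sub_nonneg.2 (hsq2 i))]
  have P1 : (M * M - (1 - τ * lam1) ^ 2 • (1 : Matrix (Fin N) (Fin N) ℝ)).PosSemidef := by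
    rw [hMcd, hone, hcd_mul, hcd_smul, hcd_sub]
    exact hcd_psd _ g1
  have P2 : ((1 - τ * lam2) ^ 2 • (1 : Matrix (Fin N) (Fin N) ℝ) - M * M).PosSemidef := by
    rw [hMcd, hone, hcd_mul, hcd_smul, hcd_sub]
    exact hcd_psd _ g2
  have P3 : (M * Δ * M - (1 - τ * lam1) ^ 2 • Δ).PosSemidef := by
    rw [hMcd, hΔcd, hcd_mul, hcd_mul, hcd_smul, hcd_sub]
    exact hcd_psd _ g3
  have P4 : ((1 - τ * lam2) ^ 2 • Δ - M * Δ * M).PosSemidef := by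
    rw [hMcd, hΔcd, hcd_mul, hcd_mul, hcd_smul, hcd_sub]
    exact hcd_psd _ g4
  -- transpose facts
  have hΔT : Δᵀ = Δ := by
    have := hH.eq
    simpa [Matrix.conjTranspose, Matrix.map, Matrix.transpose] using this
  have hMT : Mᵀ = M := by
    rw [hMdef]
    simp [Matrix.transpose_sub, Matrix.transpose_smul, hΔT]
  set S := Z (m + 1) with hSdef
  set W := S - Z m with hWdef
  have hstep : Z (m + 1 + 1) = M * S := hZ (m + 1)
  have hstep0 : S = M * Z m := hZ m
  have hdiff : Z (m + 1 + 1) - S = M * W := by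
    rw [hstep, hWdef, Matrix.mul_sub, ← hstep0]
  -- trace identities
  have e1 : ∑ i, ∑ c, (Z (m + 1 + 1) i c - S i c) ^ 2
      = (Wᵀ * (M * M) * W).trace := by
    have h' : ∑ i, ∑ c, (Z (m + 1 + 1) i c - S i c) ^ 2
        = ((M * W)ᵀ * (M * W)).trace := by
      rw [← hdiff, ← frob_trace]
      simp [Matrix.sub_apply]
    rw [h', Matrix.transpose_mul, hMT, Matrix.mul_assoc, ← Matrix.mul_assoc M M W,
      ← Matrix.mul_assoc]
  have e2 : ∑ i, ∑ c, (S i c - Z m i c) ^ 2 = (Wᵀ * W).trace := by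
    rw [← frob_trace]
    simp [hWdef, Matrix.sub_apply]
  have e3 : ((Z (m + 1 + 1))ᵀ * Δ * Z (m + 1 + 1)).trace
      = (Sᵀ * (M * Δ * M) * S).trace := by
    rw [hstep, Matrix.transpose_mul, hMT]
    simp only [Matrix.mul_assoc]
  rw [e1, e2, e3]
  -- quadratic form inequalities
  have i1 : (1 - τ * lam1) ^ 2 * (Wᵀ * W).trace ≤ (Wᵀ * (M * M) * W).trace := by
    have h := quad_mono ((1 - τ * lam1) ^ 2 • (1 : Matrix (Fin N) (Fin N) ℝ)) (M * M) P1 W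
    rwa [Matrix.mul_smul, Matrix.mul_one, Matrix.smul_mul, trace_smul, smul_eq_mul] at h
  have i2 : (Wᵀ * (M * M) * W).trace ≤ (1 - τ * lam2) ^ 2 * (Wᵀ * W).trace := by
    have h := quad_mono (M * M) ((1 - τ * lam2) ^ 2 • (1 : Matrix (Fin N) (Fin N) ℝ)) P2 W
    rwa [Matrix.mul_smul, Matrix.mul_one, Matrix.smul_mul, trace_smul, smul_eq_mul] at h
  have i3 : (1 - τ * lam1) ^ 2 * (Sᵀ * Δ * S).trace ≤ (Sᵀ * (M * Δ * M) * S).trace := by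
    have h := quad_mono ((1 - τ * lam1) ^ 2 • Δ) (M * Δ * M) P3 S
    rwa [Matrix.mul_smul, Matrix.smul_mul, trace_smul, smul_eq_mul] at h
  have i4 : (Sᵀ * (M * Δ * M) * S).trace ≤ (1 - τ * lam2) ^ 2 * (Sᵀ * Δ * S).trace := by
    have h := quad_mono (M * Δ * M) ((1 - τ * lam2) ^ 2 • Δ) P4 S
    rwa [Matrix.mul_smul, Matrix.smul_mul, trace_smul, smul_eq_mul] at h
  constructor
  · nlinarith [mul_le_mul_of_nonneg_left i3 hlam.le, i1]
  · nlinarith [mul_le_mul_of_nonneg_left i4 hlam.le, i2]
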